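/- Let T be a complete theory, φ(x;y) a formula and (a_η)_{η∈2^{≤ω}} a strongly indiscernible tree in a monster model of T such that the pair (φ(x;y), (a_η)_{η∈2^{≤ω}}) witnesses ATP. Then the partial type {φ(x; a_η) : η ∈ 2^ω} has infinitely many realizations in the monster model. -/

import Mathlib

open FirstOrder FirstOrder.Language

universe u v w u_g

namespace NATPPaper

/-- Nodes of the tree `2^{≤ω}`: functions `ℕ → Option Bool` whose domain is an initial
segment of `ℕ` (possibly all of `ℕ`, giving the branches `2^ω`). -/
def TNode : Type := {f : ℕ → Option Bool // ∀ i j : ℕ, i ≤ j → f j ≠ none → f i ≠ none}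

namespace TNode

/-- The tree partial order `⊴` (end-extension / initial segment). -/
def PrefixLE (η ν : TNode) : Prop := ∀ (i : ℕ) (b : Bool), η.1 i = some b → ν.1 i = some b

/-- Comparability in the tree order. -/
def Comparable (η ν : TNode) : Prop := PrefixLE η ν ∨ PrefixLE ν η

/-- Antichain: pairwise incomparable set of nodes. -/
def IsAntichain (X : Set TNode) : Prop := ∀ η ∈ X, ∀ ν ∈ X, η ≠ ν → ¬ Comparable η ν

open Classical in
/-- The meet `η ∧ ν`: the longest common initial segment. -/
noncomputable def meet (η ν : TNode) : TNode :=
  ⟨fun i => if (∀ j ≤ i, η.1 j = ν.1 j ∧ η.1 j ≠ none) then η.1 i else none, by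
    intro i j hij hj
    dsimp only at hj ⊢
    by_cases h : ∀ k ≤ j, η.1 k = ν.1 k ∧ η.1 k ≠ none
    · have hi : ∀ k ≤ i, η.1 k = ν.1 k ∧ η.1 k ≠ none := fun k hk => h k (hk.trans hij)
      rw [if_pos hi]
      exact (h i hij).2
    · rw [if_neg h] at hj
      exact absurd rfl hj⟩

/-- The lexicographic (strict) order on tree nodes. -/
def LexLT (η ν : TNode) : Prop :=
  PrefixLE η ν ∨ ∃ i : ℕ, (∀ j < i, η.1 j = ν.1 j) ∧ η.1 i = some false ∧ ν.1 i = some true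

/-- A branch of the tree: an element of `2^ω`. -/
def IsBranch (η : TNode) : Prop := ∀ i : ℕ, η.1 i ≠ none

/-- A finite node `η ∈ 2^{<ω}`, coded by a list of booleans. -/
def ofList (l : List Bool) : TNode :=
  ⟨fun i => l[i]?, by
    intro i j hij hj
    dsimp only at hj ⊢
    rw [Ne, List.getElem?_eq_none_iff] at hj ⊢
    intro hi
    exact hj (le_trans hi hij)⟩

/-- The branch of `2^ω` determined by `f : ℕ → Bool`. -/
def ofBranch (f : ℕ → Bool) : TNode := ⟨fun i => some (f i), fun _ _ _ h => by simp at h ⊢⟩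

end TNode

/-- The language of trees `{⊴, <_lex, ∧}`: one binary function (meet) and two binary
relations (tree order and lexicographic order). -/
def treeLang : FirstOrder.Language :=
  ⟨fun n => PLift (n = 2), fun n => PLift (n = 2) ⊕ PLift (n = 2)⟩

noncomputable instance : treeLang.Structure TNode where
  funMap {n} f v := TNode.meet (v ⟨0, by have := f.down; omega⟩)
    (v ⟨1, by have := f.down; omega⟩)
  RelMap {n} R v :=
    match R with
    | Sum.inl h => TNode.PrefixLE (v ⟨0, by have := h.down; omega⟩)
        (v ⟨1, by have := h.down; omega⟩)
    | Sum.inr h => TNode.LexLT (v ⟨0, by have := h.down; omega⟩)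
        (v ⟨1, by have := h.down; omega⟩)


variable {L : FirstOrder.Language.{u, v}}

/-- A tree-indexed family `(a_η)_{η ∈ 2^{≤ω}}` of `γ`-tuples in `M` is strongly indiscernible
over `A`: finite tuples of indices with the same quantifier-free type in the tree language
`{⊴, <_lex, ∧}` yield parameter tuples with the same type over `A`. -/
def StronglyIndiscernibleOver (L : FirstOrder.Language.{u, v}) {M : Type w} [L.Structure M]
    {γ : Type u_g} (a : TNode → γ → M) (A : Set M) : Prop :=
  ∀ (n : ℕ) (η ν : Fin n → TNode),
    (∀ φ : treeLang.Formula (Fin n), BoundedFormula.IsQF φ → (φ.Realize η ↔ φ.Realize ν)) →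
    ∀ (k : ℕ) (c : Fin k → M), (∀ j, c j ∈ A) →
      ∀ ψ : L.Formula ((Fin n × γ) ⊕ Fin k),
        (ψ.Realize (Sum.elim (fun p => a (η p.1) p.2) c) ↔
          ψ.Realize (Sum.elim (fun p => a (ν p.1) p.2) c))

/-- `(φ(x; y), (a_η)_{η ∈ 2^{≤ω}})` witnesses ATP: for every subset `X ⊆ 2^{≤ω}`, the partial
type `{φ(x; a_η) : η ∈ X}` is realized iff `X` is an antichain. -/
def ATPWitnessFull {M : Type w} [L.Structure M] {n m : ℕ}
    (φ : L.Formula (Fin n ⊕ Fin m)) (a : TNode → Fin m → M) : Prop :=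
  ∀ X : Set TNode,
    (∃ b : Fin n → M, ∀ η ∈ X, φ.Realize (Sum.elim b (a η))) ↔ TNode.IsAntichain X

/-- `M` is `μ`-saturated (for types in small tuples of variables over small parameter sets):
every finitely satisfiable set of formulas is realized. -/
def Saturated (L : FirstOrder.Language.{u, v}) (μ : Cardinal.{w}) (M : Type w) [L.Structure M] : Prop :=
  ∀ (α β : Type w), Cardinal.mk α < μ → Cardinal.mk β < μ →
    ∀ (p : Set (L.Formula (α ⊕ β))) (v : β → M),
      (∀ F : Finset (L.Formula (α ⊕ β)), ↑F ⊆ p →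
          ∃ x : α → M, ∀ φ ∈ F, φ.Realize (Sum.elim x v)) →
      ∃ x : α → M, ∀ φ ∈ p, φ.Realize (Sum.elim x v)


section Aux

namespace TNode

lemma isBranch_ofBranch (f : ℕ → Bool) : (ofBranch f).IsBranch := fun i => by
  simp [ofBranch]

lemma exists_some_of_isBranch {η : TNode} (h : η.IsBranch) (i : ℕ) : ∃ b, η.1 i = some b := by
  cases hc : η.1 i with
  | none => exact absurd hc (h i)
  | some b => exact ⟨b, rfl⟩

lemma eq_of_prefixLE_of_isBranch {η ν : TNode} (h : η.IsBranch) (hp : PrefixLE η ν) : η = ν := by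
  apply Subtype.ext; funext i
  obtain ⟨b, hb⟩ := exists_some_of_isBranch h i
  rw [hb, hp i b hb]

lemma ofList_apply (l : List Bool) (i : ℕ) : (ofList l).1 i = l[i]? := rfl

lemma prefixLE_ofList {l₁ l₂ : List Bool} (h : l₁ <+: l₂) : PrefixLE (ofList l₁) (ofList l₂) := by
  intro i b hb
  obtain ⟨t, rfl⟩ := h
  rw [ofList_apply] at hb ⊢
  obtain ⟨hlen, -⟩ := List.getElem?_eq_some_iff.mp hb
  rw [List.getElem?_append_left hlen]
  exact hb

lemma not_prefixLE_ofList_of_isBranch {η : TNode} (h : η.IsBranch) (l : List Bool) :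
    ¬ PrefixLE η (ofList l) := by
  intro hp
  obtain ⟨b, hb⟩ := exists_some_of_isBranch h l.length
  have h2 := hp l.length b hb
  rw [ofList_apply, List.getElem?_eq_none_iff.mpr le_rfl] at h2
  cases h2

end TNode

variable {L : FirstOrder.Language.{u, v}}

/-- Finite conjunction of a list of formulas. -/
def conjList {V : Type*} : List (L.Formula V) → L.Formula V
  | [] => ⊤
  | ψ :: rest => ψ ⊓ conjList rest

lemma realize_conjList {M : Type*} [L.Structure M] {V : Type*} (l : List (L.Formula V))
    (w : V → M) : (conjList l).Realize w ↔ ∀ ψ ∈ l, ψ.Realize w := by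
  induction l with
  | nil => simp [conjList]
  | cons ψ rest ih => simp [conjList, Formula.realize_inf, ih]

/-- The formula `φ(x_i; a_η)` relabelled to the variable set used in the saturation argument. -/
def brForm {n m : ℕ} (φ : L.Formula (Fin n ⊕ Fin m)) (i : ℕ) (η : TNode) :
    L.Formula (ULift.{w} (ℕ × Fin n) ⊕ ULift.{w} (TNode × Fin m)) :=
  φ.relabel (Sum.elim (fun l => Sum.inl ⟨(i, l)⟩) (fun r => Sum.inr ⟨(η, r)⟩))

/-- The formula expressing that the `i`-th and `j`-th tuples of variables differ. -/
def neForm (L : FirstOrder.Language.{u, v}) (n m : ℕ) (i j : ℕ) :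
    L.Formula (ULift.{w} (ℕ × Fin n) ⊕ ULift.{w} (TNode × Fin m)) :=
  ∼ (conjList ((List.finRange n).map fun l =>
      Term.equal (Term.var (Sum.inl ⟨(i, l)⟩)) (Term.var (Sum.inl ⟨(j, l)⟩))))

lemma realize_brForm {M : Type w} [L.Structure M] {n m : ℕ} (φ : L.Formula (Fin n ⊕ Fin m))
    (i : ℕ) (η : TNode) (w : ULift.{w} (ℕ × Fin n) ⊕ ULift.{w} (TNode × Fin m) → M) :
    (brForm φ i η).Realize w ↔
      φ.Realize (Sum.elim (fun l => w (Sum.inl ⟨(i, l)⟩)) (fun r => w (Sum.inr ⟨(η, r)⟩))) := by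
  rw [brForm, Formula.realize_relabel]
  have : w ∘ (Sum.elim (fun l => Sum.inl ⟨(i, l)⟩) (fun r => Sum.inr ⟨(η, r)⟩) :
      Fin n ⊕ Fin m → _) =
      Sum.elim (fun l => w (Sum.inl ⟨(i, l)⟩)) (fun r => w (Sum.inr ⟨(η, r)⟩)) := by
    funext x; cases x <;> rfl
  rw [this]

lemma realize_neForm {M : Type w} [L.Structure M] {n m : ℕ} (i j : ℕ)
    (w : ULift.{w} (ℕ × Fin n) ⊕ ULift.{w} (TNode × Fin m) → M) :
    (neForm L n m i j).Realize w ↔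
      (fun l : Fin n => w (Sum.inl ⟨(i, l)⟩)) ≠ (fun l : Fin n => w (Sum.inl ⟨(j, l)⟩)) := by
  have hc : ((conjList ((List.finRange n).map fun l =>
      Term.equal (Term.var (Sum.inl ⟨(i, l)⟩)) (Term.var (Sum.inl ⟨(j, l)⟩))) :
      L.Formula (ULift.{w} (ℕ × Fin n) ⊕ ULift.{w} (TNode × Fin m)))).Realize w ↔
      ∀ l : Fin n, w (Sum.inl ⟨(i, l)⟩) = w (Sum.inl ⟨(j, l)⟩) := by
    rw [realize_conjList]
    constructor
    · intro h l
      have := h _ (List.mem_map.mpr ⟨l, List.mem_finRange l, rfl⟩)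
      rwa [Formula.realize_equal, Term.realize_var, Term.realize_var] at this
    · intro h ψ hψ
      obtain ⟨l, -, rfl⟩ := List.mem_map.mp hψ
      rw [Formula.realize_equal, Term.realize_var, Term.realize_var]
      exact h l
  rw [neForm, Formula.realize_not, hc, Function.ne_iff]
  simp [not_forall]

/-- Core lemma: from the ATP witness, arbitrarily many pairwise distinct realizations of
`{φ(x; a_η) : η ∈ S}` for a finite set `S` of branches. -/
lemma exists_inj_realizing {M : Type w} [L.Structure M] {n m : ℕ}
    (φ : L.Formula (Fin n ⊕ Fin m)) (a : TNode → Fin m → M) (hwit : ATPWitnessFull φ a)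
    (k : ℕ) (S : Finset TNode) (hS : ∀ η ∈ S, η.IsBranch) :
    ∃ b : Fin k → Fin n → M, Function.Injective b ∧
      ∀ i, ∀ η ∈ S, φ.Realize (Sum.elim (b i) (a η)) := by
  classical
  set lst := S.toList with hlst
  set s : List Bool := List.ofFn (fun j : Fin lst.length => !(((lst.get j).1 j).getD false))
    with hs
  have hslen : s.length = lst.length := by simp [hs]
  -- `ofList (s ++ t)` is never a prefix of a branch in `S`
  have keyA : ∀ η ∈ S, ∀ t : List Bool, ¬ TNode.PrefixLE (TNode.ofList (s ++ t)) η := by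
    intro η hη t hp
    have hmem : η ∈ lst := by rw [hlst]; exact Finset.mem_toList.mpr hη
    obtain ⟨j, hj⟩ := List.mem_iff_get.mp hmem
    obtain ⟨bb, hbb⟩ := TNode.exists_some_of_isBranch (hS η hη) j
    have hsj : s[(j : ℕ)]? = some (!bb) := by
      subst hj
      rw [List.get_eq_getElem] at hbb
      simp [hs, List.getElem?_ofFn, hbb]
    have hnode : (TNode.ofList (s ++ t)).1 j = some (!bb) := by
      rw [TNode.ofList_apply, List.getElem?_append_left (by rw [hslen]; exact j.2)]
      exact hsj
    have h2 := hp j (!bb) hnode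
    rw [hbb] at h2
    have : bb = !bb := by injection h2
    simp at this
  set ν : ℕ → TNode := fun i => TNode.ofList (s ++ List.replicate i false) with hν
  have hchain : ∀ i j : ℕ, i ≤ j → TNode.PrefixLE (ν i) (ν j) := by
    intro i j hij
    apply TNode.prefixLE_ofList
    refine ⟨List.replicate (j - i) false, ?_⟩
    rw [List.append_assoc, ← List.replicate_add]
    congr 2
    omega
  have hnodene : ∀ i j : ℕ, i < j → ν i ≠ ν j := by
    intro i j hij heq
    have h1 : (ν i).1 (s.length + i) = none := by
      rw [hν]
      rw [TNode.ofList_apply, List.getElem?_eq_none_iff.mpr (by simp)]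
    have h2 : (ν j).1 (s.length + i) = some false := by
      rw [hν]
      rw [TNode.ofList_apply, List.getElem?_append_right (by omega)]
      have : s.length + i - s.length = i := by omega
      rw [this]
      rw [List.getElem?_eq_some_iff]
      refine ⟨by simpa using hij, ?_⟩
      simp
    rw [heq, h2] at h1
    cases h1
  have hincomp : ∀ i : ℕ, ∀ η ∈ S, ¬ TNode.Comparable (ν i) η := by
    intro i η hη hc
    rcases hc with h | h
    · exact keyA η hη _ h
    · exact TNode.not_prefixLE_ofList_of_isBranch (hS η hη) _ h
  have hanti : ∀ i : ℕ, TNode.IsAntichain (insert (ν i) {η | η ∈ S}) := by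
    intro i x hx y hy hxy
    rcases hx with rfl | hx
    · rcases hy with rfl | hy
      · exact absurd rfl hxy
      · exact hincomp i y hy
    · rcases hy with rfl | hy
      · intro hc
        exact hincomp i x hx (Or.symm hc)
      · intro hc
        rcases hc with h | h
        · exact hxy (TNode.eq_of_prefixLE_of_isBranch (hS x hx) h)
        · exact hxy (TNode.eq_of_prefixLE_of_isBranch (hS y hy) h).symm
  have hbex : ∀ i : Fin k, ∃ b : Fin n → M,
      ∀ η ∈ insert (ν i) {η | η ∈ S}, φ.Realize (Sum.elim b (a η)) :=
    fun i => (hwit _).mpr (hanti i)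
  choose b hb using hbex
  have key : ∀ i j : Fin k, (i : ℕ) < (j : ℕ) → b i ≠ b j := by
    intro i j hij heq
    have hreal : ∃ bb : Fin n → M, ∀ η ∈ ({ν i, ν j} : Set TNode),
        φ.Realize (Sum.elim bb (a η)) := by
      refine ⟨b i, ?_⟩
      intro η hη
      rcases hη with rfl | hη
      · exact hb i (ν i) (Set.mem_insert _ _)
      · rw [Set.mem_singleton_iff] at hη
        subst hη
        rw [heq]
        exact hb j (ν j) (Set.mem_insert _ _)
    have hAC := (hwit _).mp hreal
    have hcomp := hAC (ν i) (by left; rfl) (ν j) (by right; rfl) (hnodene i j hij)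
    exact hcomp (Or.inl (hchain i j (le_of_lt hij)))
  refine ⟨b, ?_, ?_⟩
  · intro i j heq
    by_contra hne'
    have hvalne : (i : ℕ) ≠ (j : ℕ) := fun h => hne' (Fin.ext h)
    rcases hvalne.lt_or_gt with h | h
    · exact key i j h heq
    · exact key j i h heq.symm
  · intro i η hη
    exact hb i η (Set.mem_insert_iff.mpr (Or.inr hη))

end Aux

/-- **Remark 2.16**: If `(φ(x; y), (a_η)_{η ∈ 2^{≤ω}})` is a strongly indiscernible tree
witnessing ATP in a monster model of a complete theory `T`, then the partial type
`{φ(x; a_η) : η ∈ 2^ω}` has infinitely many realizations. -/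
theorem infinitely_many_realizations_of_branches
    (T : L.Theory) (hT : T.IsComplete)
    (M : Type w) [L.Structure M] [Nonempty M] (hM : M ⊨ T)
    (μ : Cardinal.{w}) (hμ : Cardinal.continuum < μ) (hsat : Saturated L μ M)
    {n m : ℕ} (φ : L.Formula (Fin n ⊕ Fin m)) (a : TNode → Fin m → M)
    (hind : StronglyIndiscernibleOver L a (∅ : Set M))
    (hwit : ATPWitnessFull φ a) :
    {b : Fin n → M | ∀ η : TNode, TNode.IsBranch η →
        φ.Realize (Sum.elim b (a η))}.Infinite := by
  classical
  -- variable and parameter index types for the saturation argument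
  set A : Type w := ULift.{w} (ℕ × Fin n) with hA
  set B : Type w := ULift.{w} (TNode × Fin m) with hB
  have hαcard : Cardinal.mk A < μ :=
    lt_trans (lt_of_le_of_lt Cardinal.mk_le_aleph0 Cardinal.aleph0_lt_continuum) hμ
  have hTN : Cardinal.mk TNode ≤ Cardinal.continuum := by
    have h1 : Cardinal.mk TNode ≤ Cardinal.mk (ℕ → Option Bool) :=
      Cardinal.mk_le_of_injective (f := fun (x : TNode) => x.1)
        (fun x y h => Subtype.ext h)
    have h2 : Cardinal.mk (ℕ → Option Bool) = (3 : Cardinal) ^ Cardinal.aleph0 := by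
      rw [← Cardinal.power_def, Cardinal.mk_option, Cardinal.mk_bool, Cardinal.mk_nat]
      norm_num
    have h3 : (3 : Cardinal) ^ Cardinal.aleph0 ≤ Cardinal.continuum := by
      calc (3 : Cardinal) ^ Cardinal.aleph0
          ≤ Cardinal.continuum ^ Cardinal.aleph0 := by
            apply Cardinal.power_le_power_right
            exact le_trans (le_of_lt (by exact_mod_cast Cardinal.nat_lt_aleph0 3))
              Cardinal.aleph0_le_continuum
        _ = (2 ^ Cardinal.aleph0) ^ Cardinal.aleph0 := by rw [Cardinal.two_power_aleph0]
        _ = 2 ^ (Cardinal.aleph0 * Cardinal.aleph0) := by rw [Cardinal.power_mul]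
        _ = 2 ^ Cardinal.aleph0 := by rw [Cardinal.aleph0_mul_aleph0]
        _ = Cardinal.continuum := Cardinal.two_power_aleph0
    rw [h2] at h1
    exact le_trans h1 h3
  have hβcard : Cardinal.mk B < μ := by
    have h1 : Cardinal.mk (TNode × Fin m) ≤ Cardinal.continuum := by
      rw [Cardinal.mk_prod, Cardinal.lift_id, Cardinal.lift_id]
      calc Cardinal.mk TNode * Cardinal.mk (Fin m)
          ≤ Cardinal.continuum * Cardinal.continuum := by
            apply mul_le_mul' hTN
            exact le_trans (le_of_lt (by
              rw [Cardinal.mk_fintype]; exact_mod_cast Cardinal.nat_lt_aleph0 _))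
              Cardinal.aleph0_le_continuum
        _ = Cardinal.continuum := Cardinal.mul_eq_self Cardinal.aleph0_le_continuum
    rw [hB, Cardinal.mk_uLift]
    calc Cardinal.lift.{w} (Cardinal.mk (TNode × Fin m))
        ≤ Cardinal.lift.{w} Cardinal.continuum := Cardinal.lift_le.mpr h1
      _ = Cardinal.continuum := Cardinal.lift_continuum
      _ < μ := hμ
  -- the type: all `φ(x_i; a_η)` for branches `η`, together with `x_i ≠ x_j`
  set code : (ℕ × TNode) ⊕ (ℕ × ℕ) → L.Formula (A ⊕ B) :=
    Sum.elim (fun q => brForm φ q.1 q.2) (fun q => neForm L n m q.1 q.2) with hcode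
  set OK : (ℕ × TNode) ⊕ (ℕ × ℕ) → Prop :=
    Sum.elim (fun q => q.2.IsBranch) (fun q => q.1 ≠ q.2) with hOK
  set p : Set (L.Formula (A ⊕ B)) := code '' {d | OK d} with hp
  set v : B → M := fun q => a q.down.1 q.down.2 with hv
  have hfinsat : ∀ F : Finset (L.Formula (A ⊕ B)), ↑F ⊆ p →
      ∃ x : A → M, ∀ ψ ∈ F, ψ.Realize (Sum.elim x v) := by
    intro F hF
    have hch : ∀ ψ : {ψ // ψ ∈ F}, ∃ d, OK d ∧ code d = ψ.1 := by
      intro ψ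
      obtain ⟨d, hd1, hd2⟩ := hF ψ.2
      exact ⟨d, hd1, hd2⟩
    choose d hdOK hdcode using hch
    set idx : {ψ // ψ ∈ F} → ℕ := fun ψ =>
      Sum.elim (fun q => q.1) (fun q => max q.1 q.2) (d ψ) with hidx
    set k : ℕ := F.attach.sup idx + 1 with hk
    set S : Finset TNode := F.attach.image (fun ψ =>
      Sum.elim (fun q => q.2) (fun _ => TNode.ofBranch fun _ => false) (d ψ)) with hSdef
    have hS : ∀ η ∈ S, η.IsBranch := by
      intro η hη
      rw [hSdef, Finset.mem_image] at hη
      obtain ⟨ψ, -, rfl⟩ := hη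
      have hok := hdOK ψ
      rcases hd : d ψ with q | q
      · rw [hd] at hok
        exact hok
      · exact TNode.isBranch_ofBranch _
    obtain ⟨b, hbinj, hbreal⟩ := exists_inj_realizing φ a hwit k S hS
    refine ⟨fun q => if h : q.down.1 < k then b ⟨q.down.1, h⟩ q.down.2
      else b ⟨0, Nat.succ_pos _⟩ q.down.2, ?_⟩
    intro ψ hψ
    have hcode' : code (d ⟨ψ, hψ⟩) = ψ := hdcode ⟨ψ, hψ⟩
    have hOK' := hdOK ⟨ψ, hψ⟩
    have hidxle : Sum.elim (fun q => q.1) (fun q => max q.1 q.2) (d ⟨ψ, hψ⟩) ≤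
        F.attach.sup idx := by
      have := Finset.le_sup (f := idx) (Finset.mem_attach F ⟨ψ, hψ⟩)
      rwa [hidx] at this
    have hdmemS : ∀ q : ℕ × TNode, d ⟨ψ, hψ⟩ = Sum.inl q → q.2 ∈ S := by
      intro q hq
      rw [hSdef, Finset.mem_image]
      exact ⟨⟨ψ, hψ⟩, Finset.mem_attach _ _, by rw [hq]; rfl⟩
    obtain ⟨dd, hdd⟩ : ∃ dd, dd = d ⟨ψ, hψ⟩ := ⟨_, rfl⟩
    rw [← hdd] at hcode' hOK' hidxle hdmemS
    rcases dd with q | q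
    · -- a branch formula
      obtain ⟨i, η⟩ := q
      simp only [Sum.elim_inl] at hidxle
      have hik : i < k := by omega
      have hηS : η ∈ S := hdmemS (i, η) rfl
      rw [← hcode']
      simp only [hcode, Sum.elim_inl]
      rw [realize_brForm]
      have harg : (Sum.elim
          (fun l => Sum.elim (fun q : A => if h : q.down.1 < k then b ⟨q.down.1, h⟩ q.down.2
            else b ⟨0, Nat.succ_pos _⟩ q.down.2) v (Sum.inl ⟨(i, l)⟩))
          (fun r => Sum.elim (fun q : A => if h : q.down.1 < k then b ⟨q.down.1, h⟩ q.down.2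
            else b ⟨0, Nat.succ_pos _⟩ q.down.2) v (Sum.inr ⟨(η, r)⟩)) :
            Fin n ⊕ Fin m → M) =
          Sum.elim (b ⟨i, hik⟩) (a η) := by
        funext z
        cases z with
        | inl l => simp [dif_pos hik]
        | inr r => simp [hv]
      rw [harg]
      exact hbreal ⟨i, hik⟩ η hηS
    · -- an inequality formula
      obtain ⟨i, j⟩ := q
      simp only [Sum.elim_inr] at hidxle
      have hik : i < k := by omega
      have hjk : j < k := by omega
      rw [← hcode']
      simp only [hcode, Sum.elim_inr]
      rw [realize_neForm]
      intro hcontra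
      have hfun : b ⟨i, hik⟩ = b ⟨j, hjk⟩ := by
        funext l
        have := congrFun hcontra l
        simpa [dif_pos hik, dif_pos hjk] using this
      have := hbinj hfun
      exact hOK' (by injection this)
  obtain ⟨x, hx⟩ := hsat A B hαcard hβcard p v hfinsat
  set f : ℕ → (Fin n → M) := fun i l => x ⟨(i, l)⟩ with hf
  apply Set.infinite_of_injective_forall_mem (f := f)
  · intro i j hij
    by_contra hne
    have hmem : neForm L n m i j ∈ p := ⟨Sum.inr (i, j), hne, rfl⟩
    have := hx _ hmem
    rw [realize_neForm] at this
    exact this (by funext l; exact congrFun hij l)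
  · intro i
    intro η hη
    have hmem : brForm φ i η ∈ p := ⟨Sum.inl (i, η), hη, rfl⟩
    have := hx _ hmem
    rw [realize_brForm] at this
    have harg : (Sum.elim (fun l => Sum.elim x v (Sum.inl ⟨(i, l)⟩))
        (fun r => Sum.elim x v (Sum.inr ⟨(η, r)⟩)) : Fin n ⊕ Fin m → M) =
        Sum.elim (f i) (a η) := by
      funext z
      cases z with
      | inl l => rfl
      | inr r => rfl
    rw [harg] at this
    exact this


end NATPPaper
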